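/- Rado's theorem: Let A be an n×n complex matrix with eigenvalues λ₁,…,λₙ, and let x₁,…,x_k be linearly independent eigenvectors for λ₁,…,λ_k; set X = [x₁ ⋯ x_k]. Then for any C ∈ M_{n×k}(ℂ), the matrix = A + XCᵀ has eigenvalues μ₁,…,μ_k, λ_{k+1},…,λₙ, where μ₁,…,μ_k are the eigenvalues of Ω = diag(λ₁,…,λ_k) + CᵀX. -/

import Mathlib

open Polynomial Matrix
lemma eval_charpoly_det {m : Type*} [Fintype m] [DecidableEq m] (M : Matrix m m ℂ) (t : ℂ) :
    (M.charpoly).eval t = (t • (1 : Matrix m m ℂ) - M).det := by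
  rw [Matrix.charpoly, _root_.eval_det, matPolyEquiv_charmatrix]
  rw [eval_sub, eval_X, eval_C]
  congr 1
  rw [Matrix.scalar_apply, smul_eq_diagonal_mul, Matrix.mul_one]

/-- **Rado's theorem.** If `A` has eigenvalues `λ₁, …, λₙ` (with multiplicity) and
`x₁, …, x_k` are linearly independent eigenvectors for `λ₁, …, λ_k` forming the
columns of `Xm`, then for any `n × k` matrix `Cm`, the matrix `A + Xm Cmᵀ` has
eigenvalues `μ₁, …, μ_k, λ_{k+1}, …, λₙ` where the `μⱼ` are the eigenvalues of
`Ω = diag(λ₁,…,λ_k) + Cmᵀ Xm`. -/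
theorem rado (n k : ℕ) (hk : k ≤ n) (A : Matrix (Fin n) (Fin n) ℂ) (lam : Fin n → ℂ)
    (hchar : A.charpoly = ∏ i, (X - C (lam i)))
    (Xm : Matrix (Fin n) (Fin k) ℂ)
    (hli : LinearIndependent ℂ (fun j : Fin k => fun i : Fin n => Xm i j))
    (hev : ∀ j : Fin k,
      A.mulVec (fun i => Xm i j) = lam (Fin.castLE hk j) • (fun i => Xm i j))
    (Cm : Matrix (Fin n) (Fin k) ℂ) :
    (A + Xm * Cmᵀ).charpoly
      = (Matrix.diagonal (fun j : Fin k => lam (Fin.castLE hk j)) + Cmᵀ * Xm).charpoly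
        * ∏ i ∈ Finset.univ.filter (fun i : Fin n => k ≤ (i : ℕ)), (X - C (lam i)) := by
    classical
  set Λ : Matrix (Fin k) (Fin k) ℂ :=
    Matrix.diagonal (fun j : Fin k => lam (Fin.castLE hk j)) with hΛ
  have hAX : A * Xm = Xm * Λ := by
    ext i j
    have h := congrFun (hev j) i
    simp only [Matrix.mulVec, dotProduct, Pi.smul_apply, smul_eq_mul] at h
    rw [hΛ, Matrix.mul_diagonal, Matrix.mul_apply, h, mul_comm]
  apply Polynomial.eq_of_infinite_eval_eq
  have hinf : ({t : ℂ | ∀ i, t ≠ lam i}).Infinite := by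
    have hset : {t : ℂ | ∀ i, t ≠ lam i} = (Set.range lam)ᶜ := by
      ext t; simp [not_exists, eq_comm]
    rw [hset]
    exact (Set.finite_range lam).infinite_compl
  refine hinf.mono (fun t ht => ?_)
  simp only [Set.mem_setOf_eq] at ht ⊢
  set B := t • (1 : Matrix (Fin n) (Fin n) ℂ) - A with hB
  set D := t • (1 : Matrix (Fin k) (Fin k) ℂ) - Λ with hD
  have ha : B.det = ∏ i, (t - lam i) := by
    have h := congrArg (Polynomial.eval t) hchar
    rw [eval_charpoly_det] at h
    simpa [Polynomial.eval_prod] using h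
  have hbD : D = Matrix.diagonal (fun j : Fin k => t - lam (Fin.castLE hk j)) := by
    ext i j
    rcases eq_or_ne i j with rfl | h
    · simp [hD, hΛ, Matrix.one_apply]
    · simp [hD, hΛ, Matrix.one_apply_ne h, Matrix.diagonal_apply_ne _ h]
  have hb : D.det = ∏ j : Fin k, (t - lam (Fin.castLE hk j)) := by
    rw [hbD, Matrix.det_diagonal]
  have ha0 : B.det ≠ 0 := by
    rw [ha]
    exact Finset.prod_ne_zero_iff.mpr (fun i _ => sub_ne_zero.mpr (ht i))
  have hb0 : D.det ≠ 0 := by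
    rw [hb]
    exact Finset.prod_ne_zero_iff.mpr (fun j _ => sub_ne_zero.mpr (ht _))
  have hBu : IsUnit B.det := isUnit_iff_ne_zero.mpr ha0
  have hDu : IsUnit D.det := isUnit_iff_ne_zero.mpr hb0
  have hBX : B * Xm = Xm * D := by
    rw [hB, hD, Matrix.sub_mul, Matrix.mul_sub, hAX, Matrix.smul_mul, Matrix.one_mul,
      Matrix.mul_smul, Matrix.mul_one]
  have hinvX : B⁻¹ * Xm = Xm * D⁻¹ := by
    have h2 : B⁻¹ * (Xm * D) * D⁻¹ = Xm * D⁻¹ := by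
      rw [← hBX, ← Matrix.mul_assoc, Matrix.nonsing_inv_mul B hBu, Matrix.one_mul]
    calc B⁻¹ * Xm = B⁻¹ * (Xm * (D * D⁻¹)) := by
            rw [Matrix.mul_nonsing_inv D hDu, Matrix.mul_one]
      _ = B⁻¹ * (Xm * D) * D⁻¹ := by
            simp only [Matrix.mul_assoc]
      _ = Xm * D⁻¹ := h2
  -- left side
  have e1 : t • (1 : Matrix (Fin n) (Fin n) ℂ) - (A + Xm * Cmᵀ)
      = B * (1 - B⁻¹ * Xm * Cmᵀ) := by
    rw [Matrix.mul_sub, Matrix.mul_one, ← Matrix.mul_assoc, ← Matrix.mul_assoc,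
      Matrix.mul_nonsing_inv B hBu, Matrix.one_mul, hB, sub_sub]
  have e2 : (1 : Matrix (Fin k) (Fin k) ℂ) - Cmᵀ * (Xm * D⁻¹)
      = (D - Cmᵀ * Xm) * D⁻¹ := by
    rw [Matrix.sub_mul, Matrix.mul_nonsing_inv D hDu, Matrix.mul_assoc]
  have hL : Polynomial.eval t (A + Xm * Cmᵀ).charpoly
      = B.det * ((D - Cmᵀ * Xm).det * (D.det)⁻¹) := by
    rw [eval_charpoly_det, e1, Matrix.det_mul, Matrix.det_one_sub_mul_comm,
      hinvX, e2, Matrix.det_mul, Matrix.det_nonsing_inv, Ring.inverse_eq_inv]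
  have hsub : D - Cmᵀ * Xm = t • (1 : Matrix (Fin k) (Fin k) ℂ) - (Λ + Cmᵀ * Xm) := by
    rw [hD, sub_sub]
  -- product split
  have hsplit : (∏ i, (t - lam i)) =
      (∏ j : Fin k, (t - lam (Fin.castLE hk j)))
        * ∏ i ∈ Finset.univ.filter (fun i : Fin n => k ≤ (i : ℕ)), (t - lam i) := by
    rw [← Finset.prod_filter_mul_prod_filter_not Finset.univ (fun i : Fin n => (i : ℕ) < k)]
    congr 1
    · refine (Finset.prod_nbij (fun j => Fin.castLE hk j) ?_ ?_ ?_ ?_).symm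
      · intro j _; simp [j.isLt]
      · intro a _ b _ h; exact Fin.castLE_injective hk h
      · intro i hi
        simp only [Finset.coe_filter, Set.mem_setOf_eq, Finset.mem_univ, true_and] at hi
        exact ⟨⟨(i : ℕ), hi⟩, by simp, by ext; simp⟩
      · intro j _; rfl
    · apply Finset.prod_congr _ (fun _ _ => rfl)
      ext i; simp [not_lt]
  -- finish
  rw [hL, eval_mul, eval_charpoly_det, Polynomial.eval_prod]
  simp only [eval_sub, eval_X, eval_C]
  rw [hsub, ha, hsplit, ← hb]
  field_simp
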